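/- Suppose A1 holds, ψ is twice differentiable, and F = f + ψ. Under the same hypotheses as in the zeroth-order block lemma (σ ≥ 2⁴·(2/3)^{1/3}·m·L; ‖B − ∇²f(x₀)‖ ≤ (2nL/3)·h with 0 < h ≤ [3⁴σ^{3/2}ε^{3/2}/(2^{14}·192·n³L³)]^{1/3}; ‖g_t − ∇f(x_t)‖ ≤ (√n·L/6)·h_g² with h_g = 3^{−1/3}[εm/(σn^{1/2})]^{1/2}; and each x_{t+1} satisfying M_{x_t,σ}(x_{t+1}) + ψ(x_{t+1}) ≤ F(x_t) and ‖∇M_{x_t,σ}(x_{t+1}) + ψ'(x_{t+1})‖ ≤ (σ/4)‖x_{t+1} − x_t‖², with g = g_t and the same B in the model), assume additionally that each x_{t+1} satisfies B + σ‖x_{t+1} − x_t‖·I + ∇²ψ(x_{t+1}) ⪰ 0. Then either min_{1 ≤ t ≤ m} max{ ‖∇f(x_t) + ψ'(x_t)‖, (1/σ)·(2/3)^{10/3}·ξ(x_t)² } ≤ ε, or F(x₀) − F(x_m) ≥ m·ε^{3/2}/(2·192·σ^{1/2}). -/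

import Mathlib

open RealInnerProductSpace
open Set

/-- `negEigPart F y` is ξ(y) = max{−λ_min(∇²F(y)), 0}, defined as the least `c ≥ 0` such
that `∇²F(y) ⪰ −c·I`. -/
noncomputable def negEigPart {n : ℕ} (F : EuclideanSpace ℝ (Fin n) → ℝ)
    (y : EuclideanSpace ℝ (Fin n)) : ℝ :=
  sInf {c : ℝ | 0 ≤ c ∧ ∀ v : EuclideanSpace ℝ (Fin n),
    -(c * ‖v‖ ^ 2) ≤ ⟪fderiv ℝ (gradient F) y v, v⟫}

section Aux

variable {E : Type*} [NormedAddCommGroup E] [InnerProductSpace ℝ E] [CompleteSpace E]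

lemma inner_gradient_eq (f : E → ℝ) (y v : E) : ⟪gradient f y, v⟫ = fderiv ℝ f y v := by
  simp [gradient, InnerProductSpace.toDual_symm_apply]

lemma contDiff_gradient' {f : E → ℝ} (hf : ContDiff ℝ 2 f) : ContDiff ℝ 1 (gradient f) := by
  have h1 : ContDiff ℝ 1 (fderiv ℝ f) := hf.fderiv_right (by norm_num)
  have : gradient f = fun y => (InnerProductSpace.toDual ℝ E).symm (fderiv ℝ f y) := rfl
  rw [this]
  exact (InnerProductSpace.toDual ℝ E).symm.contDiff.comp h1

lemma gradient_add'' {f g : E → ℝ} (hf : Differentiable ℝ f) (hg : Differentiable ℝ g) (y : E) :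
    gradient (fun z => f z + g z) y = gradient f y + gradient g y := by
  simp only [gradient]
  rw [fderiv_fun_add (hf y) (hg y), map_add]

lemma inner_ge_neg_opNorm (A : E →L[ℝ] E) (v : E) : -(‖A‖ * ‖v‖ ^ 2) ≤ ⟪A v, v⟫ := by
  have h1 : ⟪-(A v), v⟫ ≤ ‖A v‖ * ‖v‖ := by
    refine (real_inner_le_norm _ _).trans ?_
    rw [norm_neg]
  have h2 : ‖A v‖ * ‖v‖ ≤ ‖A‖ * ‖v‖ ^ 2 := by
    have h3 := mul_le_mul_of_nonneg_right (A.le_opNorm v) (norm_nonneg v)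
    calc ‖A v‖ * ‖v‖ ≤ ‖A‖ * ‖v‖ * ‖v‖ := h3
      _ = ‖A‖ * ‖v‖ ^ 2 := by ring
  have h4 : ⟪-(A v), v⟫ = -⟪A v, v⟫ := inner_neg_left _ _
  linarith

lemma taylor_grad' {f : E → ℝ} {L : ℝ} (hf : ContDiff ℝ 2 f)
    (hLip : ∀ u v : E, ‖fderiv ℝ (gradient f) v - fderiv ℝ (gradient f) u‖ ≤ L * ‖v - u‖)
    (x y : E) :
    ‖gradient f y - gradient f x - fderiv ℝ (gradient f) x (y - x)‖ ≤ L / 2 * ‖y - x‖ ^ 2 := by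
  set G := gradient f with hG
  set H := fun z => fderiv ℝ G z with hH
  set v := y - x with hv
  have hGd : Differentiable ℝ G := (contDiff_gradient' hf).differentiable one_ne_zero
  set c := fun t : ℝ => x + t • v with hc
  have hcd : ∀ t : ℝ, HasDerivAt c v t := by
    intro t
    simpa [hc] using ((hasDerivAt_id t).smul_const v).const_add x
  set φ := fun t : ℝ => G (c t) - G x - t • (H x v) with hφ
  have hφd : ∀ t : ℝ, HasDerivAt φ (H (c t) v - H x v) t := by
    intro t
    have h1 : HasDerivAt (fun t => G (c t)) (H (c t) v) t :=
      (hGd (c t)).hasFDerivAt.comp_hasDerivAt t (hcd t)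
    have h2 : HasDerivAt (fun t : ℝ => t • (H x v)) (H x v) t := by
      simpa using (hasDerivAt_id t).smul_const (H x v)
    exact (h1.sub_const (G x)).sub h2
  have hcont : ContinuousOn φ (Icc (0:ℝ) 1) :=
    fun t _ => (hφd t).continuousAt.continuousWithinAt
  have hderiv : ∀ t ∈ Ico (0:ℝ) 1, HasDerivWithinAt φ (H (c t) v - H x v) (Ici t) t :=
    fun t _ => (hφd t).hasDerivWithinAt
  have ha : ‖φ 0‖ ≤ L * ‖v‖ ^ 2 / 2 * 0 ^ 2 := by simp [hφ, hc]
  have hB : ∀ t : ℝ, HasDerivAt (fun t => L * ‖v‖ ^ 2 / 2 * t ^ 2) (L * ‖v‖ ^ 2 / 2 * (2 * t)) t := by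
    intro t
    simpa using (hasDerivAt_pow 2 t).const_mul (L * ‖v‖ ^ 2 / 2)
  have bound : ∀ t ∈ Ico (0:ℝ) 1, ‖H (c t) v - H x v‖ ≤ L * ‖v‖ ^ 2 / 2 * (2 * t) := by
    intro t ht
    have h1 : ‖H (c t) v - H x v‖ ≤ ‖H (c t) - H x‖ * ‖v‖ := by
      have := (H (c t) - H x).le_opNorm v
      simpa using this
    have h2 : ‖H (c t) - H x‖ ≤ L * ‖c t - x‖ := hLip x (c t)
    have h3 : ‖c t - x‖ = t * ‖v‖ := by
      simp [hc, norm_smul, abs_of_nonneg ht.1]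
    calc ‖H (c t) v - H x v‖ ≤ (L * (t * ‖v‖)) * ‖v‖ := by
          refine h1.trans (mul_le_mul_of_nonneg_right ?_ (norm_nonneg v))
          rw [← h3]; exact h2
      _ = L * ‖v‖ ^ 2 / 2 * (2 * t) := by ring
  have key := image_norm_le_of_norm_deriv_right_le_deriv_boundary hcont hderiv ha hB bound
  have h1 := key (by norm_num : (1:ℝ) ∈ Icc (0:ℝ) 1)
  have hc1 : c 1 = y := by simp [hc, hv]
  have hφ1 : φ 1 = G y - G x - (fderiv ℝ (gradient f) x) (y - x) := by
    rw [hφ]; simp only [hc1, one_smul]; rfl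
  rw [hφ1] at h1
  calc ‖G y - G x - (fderiv ℝ (gradient f) x) (y - x)‖ ≤ L * ‖v‖ ^ 2 / 2 * 1 ^ 2 := h1
    _ = L / 2 * ‖y - x‖ ^ 2 := by rw [hv]; ring

lemma taylor_fun {f : E → ℝ} {L : ℝ} (hf : ContDiff ℝ 2 f)
    (hLip : ∀ u v : E, ‖fderiv ℝ (gradient f) v - fderiv ℝ (gradient f) u‖ ≤ L * ‖v - u‖)
    (x y : E) :
    f y ≤ f x + ⟪gradient f x, y - x⟫ + 1 / 2 * ⟪fderiv ℝ (gradient f) x (y - x), y - x⟫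
      + L / 6 * ‖y - x‖ ^ 3 := by
  set G := gradient f with hG
  set H := fderiv ℝ G with hH
  set v := y - x with hv
  have hfd : Differentiable ℝ f := hf.differentiable (by norm_num)
  have hGd : Differentiable ℝ G := (contDiff_gradient' hf).differentiable one_ne_zero
  set c := fun t : ℝ => x + t • v with hc
  have hcd : ∀ t : ℝ, HasDerivAt c v t := by
    intro t
    simpa [hc] using ((hasDerivAt_id t).smul_const v).const_add x
  set φ := fun t : ℝ => f (c t) - f x - t * ⟪G x, v⟫ - t ^ 2 / 2 * ⟪H x v, v⟫ with hφ
  set φ' := fun t : ℝ => ⟪G (c t) - G x - t • (H x v), v⟫ with hφ'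
  have hφd : ∀ t : ℝ, HasDerivAt φ (φ' t) t := by
    intro t
    have h1 : HasDerivAt (fun t => f (c t)) (fderiv ℝ f (c t) v) t :=
      (hfd (c t)).hasFDerivAt.comp_hasDerivAt t (hcd t)
    have h2 : HasDerivAt (fun s : ℝ => s * ⟪G x, v⟫) ⟪G x, v⟫ t := by
      simpa using (hasDerivAt_id t).mul_const ⟪G x, v⟫
    have h3 : HasDerivAt (fun s : ℝ => s ^ 2 / 2 * ⟪H x v, v⟫) (t * ⟪H x v, v⟫) t := by
      have := (hasDerivAt_pow 2 t).const_mul (⟪H x v, v⟫ / 2)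
      have e : (fun s : ℝ => s ^ 2 / 2 * ⟪H x v, v⟫) = fun y => ⟪H x v, v⟫ / 2 * y ^ 2 := by
        funext s; ring
      rw [e]
      refine this.congr_deriv ?_
      rw [show (2:ℕ) - 1 = 1 from rfl, pow_one]; push_cast; ring
    have := ((h1.sub_const (f x)).sub h2).sub h3
    refine HasDerivAt.congr_deriv this ?_
    simp only [hφ', inner_sub_left, real_inner_smul_left]
    rw [inner_gradient_eq, inner_gradient_eq]
  have bound : ∀ t ∈ Ico (0:ℝ) 1, ‖φ' t‖ ≤ L * ‖v‖ ^ 3 / 6 * (3 * t ^ 2) := by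
    intro t ht
    have h1 : ‖φ' t‖ ≤ ‖G (c t) - G x - t • (H x v)‖ * ‖v‖ := by
      rw [hφ']
      exact (abs_real_inner_le_norm _ _)
    have h2 : G (c t) - G x - t • (H x v) = G (c t) - G x - H x (c t - x) := by
      have : c t - x = t • v := by simp [hc]
      rw [this, map_smul]
    have h3 := taylor_grad' hf hLip x (c t)
    rw [h2] at h1
    have h4 : ‖c t - x‖ = t * ‖v‖ := by simp [hc, norm_smul, abs_of_nonneg ht.1]
    calc ‖φ' t‖ ≤ (L / 2 * ‖c t - x‖ ^ 2) * ‖v‖ :=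
          h1.trans (mul_le_mul_of_nonneg_right h3 (norm_nonneg v))
      _ = L * ‖v‖ ^ 3 / 6 * (3 * t ^ 2) := by rw [h4]; ring
  have hcont : ContinuousOn φ (Icc (0:ℝ) 1) := fun t _ => (hφd t).continuousAt.continuousWithinAt
  have hderiv : ∀ t ∈ Ico (0:ℝ) 1, HasDerivWithinAt φ (φ' t) (Ici t) t :=
    fun t _ => (hφd t).hasDerivWithinAt
  have ha : ‖φ 0‖ ≤ L * ‖v‖ ^ 3 / 6 * 0 ^ 3 := by simp [hφ, hc]
  have hB : ∀ t : ℝ, HasDerivAt (fun t : ℝ => L * ‖v‖ ^ 3 / 6 * t ^ 3)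
      (L * ‖v‖ ^ 3 / 6 * (3 * t ^ 2)) t := by
    intro t
    simpa using (hasDerivAt_pow 3 t).const_mul (L * ‖v‖ ^ 3 / 6)
  have key := image_norm_le_of_norm_deriv_right_le_deriv_boundary hcont hderiv ha hB bound
  have h1 := key (by norm_num : (1:ℝ) ∈ Icc (0:ℝ) 1)
  have hc1 : c 1 = y := by simp [hc, hv]
  have hφ1 : φ 1 = f y - f x - ⟪G x, v⟫ - 1 / 2 * ⟪H x v, v⟫ := by
    rw [hφ]; simp only [hc1]; ring
  rw [hφ1] at h1
  have habs : f y - f x - ⟪G x, v⟫ - 1 / 2 * ⟪H x v, v⟫ ≤ L * ‖v‖ ^ 3 / 6 * 1 ^ 3 :=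
    le_of_abs_le h1
  norm_num at habs
  linarith [habs]


end Aux

section Aux2
variable {E : Type*} [NormedAddCommGroup E] [InnerProductSpace ℝ E] [CompleteSpace E]

lemma step_decrease' {f : E → ℝ} {L : ℝ} (hf : ContDiff ℝ 2 f)
    (hLip : ∀ u v : E, ‖fderiv ℝ (gradient f) v - fderiv ℝ (gradient f) u‖ ≤ L * ‖v - u‖)
    (a b gt : E) (B : E →L[ℝ] E) (σ ψa ψb : ℝ)
    (hdec : f a + ⟪gt, b - a⟫ + 1 / 2 * ⟪B (b - a), b - a⟫ + σ / 6 * ‖b - a‖ ^ 3 + ψb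
      ≤ f a + ψa) :
    (σ - L) / 6 * ‖b - a‖ ^ 3 - ‖gt - gradient f a‖ * ‖b - a‖
      - ‖fderiv ℝ (gradient f) a - B‖ / 2 * ‖b - a‖ ^ 2
    ≤ (f a + ψa) - (f b + ψb) := by
  have htay := taylor_fun hf hLip a b
  have h1 : ⟪gradient f a - gt, b - a⟫ ≤ ‖gt - gradient f a‖ * ‖b - a‖ := by
    calc ⟪gradient f a - gt, b - a⟫ ≤ ‖gradient f a - gt‖ * ‖b - a‖ := real_inner_le_norm _ _
      _ = ‖gt - gradient f a‖ * ‖b - a‖ := by rw [norm_sub_rev]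
  have h2 : ⟪fderiv ℝ (gradient f) a (b - a) - B (b - a), b - a⟫
      ≤ ‖fderiv ℝ (gradient f) a - B‖ * ‖b - a‖ ^ 2 := by
    have e1 : fderiv ℝ (gradient f) a (b - a) - B (b - a)
        = (fderiv ℝ (gradient f) a - B) (b - a) := by
      simp [ContinuousLinearMap.sub_apply]
    rw [e1]
    calc ⟪(fderiv ℝ (gradient f) a - B) (b - a), b - a⟫
        ≤ ‖(fderiv ℝ (gradient f) a - B) (b - a)‖ * ‖b - a‖ := real_inner_le_norm _ _
      _ ≤ (‖fderiv ℝ (gradient f) a - B‖ * ‖b - a‖) * ‖b - a‖ := by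
          gcongr; exact (fderiv ℝ (gradient f) a - B).le_opNorm _
      _ = ‖fderiv ℝ (gradient f) a - B‖ * ‖b - a‖ ^ 2 := by ring
  have e2 : ⟪gradient f a - gt, b - a⟫ = ⟪gradient f a, b - a⟫ - ⟪gt, b - a⟫ :=
    inner_sub_left _ _ _
  have e3 : ⟪fderiv ℝ (gradient f) a (b - a) - B (b - a), b - a⟫
      = ⟪fderiv ℝ (gradient f) a (b - a), b - a⟫ - ⟪B (b - a), b - a⟫ := inner_sub_left _ _ _
  linarith

lemma grad_bound' {f : E → ℝ} {L : ℝ} (hf : ContDiff ℝ 2 f)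
    (hLip : ∀ u v : E, ‖fderiv ℝ (gradient f) v - fderiv ℝ (gradient f) u‖ ≤ L * ‖v - u‖)
    (a b gt w : E) (B : E →L[ℝ] E) {σ : ℝ} (hσ : 0 ≤ σ)
    (hmodel : ‖gt + B (b - a) + (σ / 2 * ‖b - a‖) • (b - a) + w‖ ≤ σ / 4 * ‖b - a‖ ^ 2) :
    ‖gradient f b + w‖ ≤ L / 2 * ‖b - a‖ ^ 2 + ‖gt - gradient f a‖
      + ‖fderiv ℝ (gradient f) a - B‖ * ‖b - a‖ + 3 * σ / 4 * ‖b - a‖ ^ 2 := by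
  have hvec : gradient f b + w
      = (gradient f b - gradient f a - fderiv ℝ (gradient f) a (b - a))
        + ((gradient f a - gt)
        + (((fderiv ℝ (gradient f) a - B) (b - a))
        + (gt + B (b - a) + (σ / 2 * ‖b - a‖) • (b - a) + w
           - (σ / 2 * ‖b - a‖) • (b - a)))) := by
    simp [ContinuousLinearMap.sub_apply]
    abel
  rw [hvec]
  have n1 := taylor_grad' hf hLip a b
  have n2 : ‖gradient f a - gt‖ = ‖gt - gradient f a‖ := norm_sub_rev _ _
  have n3 : ‖(fderiv ℝ (gradient f) a - B) (b - a)‖ ≤ ‖fderiv ℝ (gradient f) a - B‖ * ‖b - a‖ :=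
    (fderiv ℝ (gradient f) a - B).le_opNorm _
  have n4 : ‖gt + B (b - a) + (σ / 2 * ‖b - a‖) • (b - a) + w - (σ / 2 * ‖b - a‖) • (b - a)‖
      ≤ σ / 4 * ‖b - a‖ ^ 2 + σ / 2 * ‖b - a‖ ^ 2 := by
    refine (norm_sub_le _ _).trans ?_
    have : ‖(σ / 2 * ‖b - a‖) • (b - a)‖ = σ / 2 * ‖b - a‖ ^ 2 := by
      rw [norm_smul, Real.norm_eq_abs, abs_of_nonneg (by positivity)]
      ring
    rw [this]
    exact add_le_add_left hmodel _
  calc ‖_ + (_ + (_ + _))‖ ≤ _ := norm_add_le _ _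
    _ ≤ L / 2 * ‖b - a‖ ^ 2 + (‖gt - gradient f a‖
        + (‖fderiv ℝ (gradient f) a - B‖ * ‖b - a‖
        + (σ / 4 * ‖b - a‖ ^ 2 + σ / 2 * ‖b - a‖ ^ 2))) := by
        gcongr
        refine (norm_add_le _ _).trans ?_
        rw [n2]
        gcongr
        refine (norm_add_le _ _).trans ?_
        gcongr
    _ = L / 2 * ‖b - a‖ ^ 2 + ‖gt - gradient f a‖
        + ‖fderiv ℝ (gradient f) a - B‖ * ‖b - a‖ + 3 * σ / 4 * ‖b - a‖ ^ 2 := by ring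

end Aux2

lemma power_mean_13' {m : ℕ} {r : ℕ → ℝ} (hr : ∀ i, 0 ≤ r i) :
    (∑ i ∈ Finset.range m, r i) ^ 3 ≤ (m : ℝ) ^ 2 * ∑ i ∈ Finset.range m, r i ^ 3 := by
  set S1 := ∑ i ∈ Finset.range m, r i with hS1
  set S2 := ∑ i ∈ Finset.range m, r i ^ 2 with hS2
  set X := ∑ i ∈ Finset.range m, r i ^ 3 with hX
  have hS1n : 0 ≤ S1 := Finset.sum_nonneg fun i _ => hr i
  have hS2n : 0 ≤ S2 := Finset.sum_nonneg fun i _ => sq_nonneg _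
  have hXn : 0 ≤ X := Finset.sum_nonneg fun i _ => pow_nonneg (hr i) 3
  have h1 : S1 ^ 2 ≤ (m : ℝ) * S2 := by
    have := sq_sum_le_card_mul_sum_sq (s := Finset.range m) (f := r)
    simpa using this
  have h2 : S2 ^ 2 ≤ S1 * X := by
    refine Finset.sum_sq_le_sum_mul_sum_of_sq_eq_mul _ (fun i _ => hr i)
      (fun i _ => pow_nonneg (hr i) 3) (fun i _ => ?_)
    ring
  rcases eq_or_lt_of_le hS1n with h | h
  · rw [← h]; simpa using mul_nonneg (by positivity : (0:ℝ) ≤ (m:ℝ)^2) hXn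
  · have h4 : S1 ^ 4 ≤ (m : ℝ) ^ 2 * (S1 * X) := by
      calc S1 ^ 4 = (S1 ^ 2) ^ 2 := by ring
        _ ≤ ((m : ℝ) * S2) ^ 2 := by
            apply pow_le_pow_left₀ (sq_nonneg _) h1
        _ = (m : ℝ) ^ 2 * S2 ^ 2 := by ring
        _ ≤ (m : ℝ) ^ 2 * (S1 * X) := by
            apply mul_le_mul_of_nonneg_left h2 (by positivity)
    have := (mul_le_mul_iff_of_pos_right h).mp (by nlinarith [h4] : S1 ^ 3 * S1 ≤ ((m:ℝ)^2 * X) * S1)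
    exact this

lemma power_mean_23' {m : ℕ} {r : ℕ → ℝ} (hr : ∀ i, 0 ≤ r i) :
    (∑ i ∈ Finset.range m, r i ^ 2) ^ 3 ≤ (m : ℝ) * (∑ i ∈ Finset.range m, r i ^ 3) ^ 2 := by
  set S1 := ∑ i ∈ Finset.range m, r i with hS1
  set S2 := ∑ i ∈ Finset.range m, r i ^ 2 with hS2
  set X := ∑ i ∈ Finset.range m, r i ^ 3 with hX
  have hS1n : 0 ≤ S1 := Finset.sum_nonneg fun i _ => hr i
  have hS2n : 0 ≤ S2 := Finset.sum_nonneg fun i _ => sq_nonneg _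
  have hXn : 0 ≤ X := Finset.sum_nonneg fun i _ => pow_nonneg (hr i) 3
  have hmn : (0:ℝ) ≤ m := Nat.cast_nonneg m
  have h2 : S2 ^ 2 ≤ S1 * X := by
    refine Finset.sum_sq_le_sum_mul_sum_of_sq_eq_mul _ (fun i _ => hr i)
      (fun i _ => pow_nonneg (hr i) 3) (fun i _ => ?_)
    ring
  have h1 : S1 ^ 3 ≤ (m : ℝ) ^ 2 * X := power_mean_13' hr
  have h6 : (S2 ^ 3) ^ 2 ≤ ((m : ℝ) * X ^ 2) ^ 2 := by
    calc (S2 ^ 3) ^ 2 = (S2 ^ 2) ^ 3 := by ring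
      _ ≤ (S1 * X) ^ 3 := pow_le_pow_left₀ (sq_nonneg _) h2 3
      _ = S1 ^ 3 * X ^ 3 := by ring
      _ ≤ ((m : ℝ) ^ 2 * X) * X ^ 3 := by
          apply mul_le_mul_of_nonneg_right h1 (by positivity)
      _ = ((m : ℝ) * X ^ 2) ^ 2 := by ring
  exact le_of_pow_le_pow_left₀ (by norm_num) (by positivity) h6

lemma cube_le {a b : ℝ} (hb : 0 ≤ b) (h : a ^ 3 ≤ b ^ 3) : a ≤ b :=
  le_of_pow_le_pow_left₀ (by norm_num) hb h

lemma rpow_cube {w : ℝ} (hw : 0 ≤ w) : (w ^ ((1:ℝ)/3)) ^ 3 = w := by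
  rw [← Real.rpow_natCast (w ^ ((1:ℝ)/3)) 3, ← Real.rpow_mul hw]
  norm_num

lemma rpow_half_sq {w : ℝ} (hw : 0 ≤ w) : (w ^ ((1:ℝ)/2)) ^ 2 = w := by
  rw [← Real.rpow_natCast (w ^ ((1:ℝ)/2)) 2, ← Real.rpow_mul hw]
  norm_num


set_option maxHeartbeats 4000000 in
/-- Lemma 10 of the paper: second-order guarantee for a block of `m`
inexact zeroth-order cubic Newton steps, with the extra semidefinite condition on the
subproblem solutions. -/
theorem stmt_13 {n : ℕ} (hn : 1 ≤ n)
    (f ψ : EuclideanSpace ℝ (Fin n) → ℝ) (Q : Set (EuclideanSpace ℝ (Fin n)))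
    (L : ℝ) (hL : 0 ≤ L)
    (hf : ContDiff ℝ 2 f)
    (hLip : ∀ u v : EuclideanSpace ℝ (Fin n),
      ‖fderiv ℝ (gradient f) v - fderiv ℝ (gradient f) u‖ ≤ L * ‖v - u‖)
    (hψ2 : ContDiff ℝ 2 ψ) (hQconv : Convex ℝ Q) (hψconv : ConvexOn ℝ Q ψ)
    (ε : ℝ) (hε : 0 < ε) (m : ℕ) (hm : 1 ≤ m)
    (x : ℕ → EuclideanSpace ℝ (Fin n)) (hxQ : ∀ t ≤ m, x t ∈ Q)
    (σ h hg : ℝ)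
    (hσ : σ ≥ 2 ^ 4 * ((2 : ℝ) / 3) ^ ((1 : ℝ) / 3) * m * L)
    (hh : 0 < h)
    (hhle : h ≤ (3 ^ 4 * σ ^ ((3 : ℝ) / 2) * ε ^ ((3 : ℝ) / 2)
      / (2 ^ 14 * 192 * (n : ℝ) ^ 3 * L ^ 3)) ^ ((1 : ℝ) / 3))
    (hgdef : hg = (3 : ℝ) ^ (-(1 : ℝ) / 3) * (ε * m / (σ * Real.sqrt n)) ^ ((1 : ℝ) / 2))
    (B : EuclideanSpace ℝ (Fin n) →L[ℝ] EuclideanSpace ℝ (Fin n))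
    (hBsym : ∀ u v : EuclideanSpace ℝ (Fin n), ⟪B u, v⟫ = ⟪u, B v⟫)
    (hB : ‖B - fderiv ℝ (gradient f) (x 0)‖ ≤ 2 * n * L / 3 * h)
    (g : ℕ → EuclideanSpace ℝ (Fin n))
    (hgapprox : ∀ t < m, ‖g t - gradient f (x t)‖ ≤ Real.sqrt n * L / 6 * hg ^ 2)
    (ψ' : ℕ → EuclideanSpace ℝ (Fin n))
    (hψ' : ∀ t < m, ∀ y : EuclideanSpace ℝ (Fin n),
      ψ (x (t + 1)) + ⟪ψ' (t + 1), y - x (t + 1)⟫ ≤ ψ y)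
    (hdec : ∀ t < m,
      f (x t) + ⟪g t, x (t + 1) - x t⟫
        + 1 / 2 * ⟪B (x (t + 1) - x t), x (t + 1) - x t⟫
        + σ / 6 * ‖x (t + 1) - x t‖ ^ 3 + ψ (x (t + 1)) ≤ f (x t) + ψ (x t))
    (hmodel : ∀ t < m,
      ‖g t + B (x (t + 1) - x t)
          + (σ / 2 * ‖x (t + 1) - x t‖) • (x (t + 1) - x t) + ψ' (t + 1)‖ ≤
        σ / 4 * ‖x (t + 1) - x t‖ ^ 2)
    (hPSD : ∀ t < m, ∀ v : EuclideanSpace ℝ (Fin n),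
      0 ≤ ⟪B v, v⟫ + σ * ‖x (t + 1) - x t‖ * ‖v‖ ^ 2
        + ⟪fderiv ℝ (gradient ψ) (x (t + 1)) v, v⟫) :
    (∃ t, 1 ≤ t ∧ t ≤ m ∧
        max ‖gradient f (x t) + ψ' t‖
          (1 / σ * ((2 : ℝ) / 3) ^ ((10 : ℝ) / 3)
            * (negEigPart (fun y => f y + ψ y) (x t)) ^ 2) ≤ ε) ∨
      (f (x 0) + ψ (x 0)) - (f (x m) + ψ (x m)) ≥
        m * ε ^ ((3 : ℝ) / 2) / (2 * 192 * Real.sqrt σ) := by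
  classical
  have hfd : Differentiable ℝ f := hf.differentiable (by norm_num)
  have hψd : Differentiable ℝ ψ := hψ2.differentiable (by norm_num)
  have hGf : Differentiable ℝ (gradient f) := (contDiff_gradient' hf).differentiable one_ne_zero
  have hGψ : Differentiable ℝ (gradient ψ) := (contDiff_gradient' hψ2).differentiable one_ne_zero
  have hm1 : 1 ≤ (m : ℝ) := by exact_mod_cast hm
  have hn1 : 1 ≤ (n : ℝ) := by exact_mod_cast hn
  have hL0 : 0 < L := by
    rcases hL.lt_or_eq with h0 | h0
    · exact h0
    · exfalso
      have hz : (2:ℝ) ^ 14 * 192 * (n:ℝ) ^ 3 * L ^ 3 = 0 := by rw [← h0]; ring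
      rw [hz, div_zero, Real.zero_rpow (by norm_num : (1:ℝ)/3 ≠ 0)] at hhle
      linarith
  set β := ((2:ℝ)/3) ^ ((1:ℝ)/3) with hβdef
  have hβpos : 0 < β := Real.rpow_pos_of_pos (by norm_num) _
  have hβ3 : β ^ 3 = 2/3 := rpow_cube (by norm_num)
  have hβlb : 0.87 ≤ β := cube_le hβpos.le (by rw [hβ3]; norm_num)
  have hmL : 13 * ((m:ℝ) * L) ≤ σ := by
    have h1 : 0 ≤ (m:ℝ) * L := mul_nonneg (Nat.cast_nonneg m) hL
    have h2 : 0 ≤ (16*β - 13) * ((m:ℝ)*L) := mul_nonneg (by linarith) h1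
    linarith [hσ, h2]
  have hmLpos : 0 < (m:ℝ) * L := mul_pos (by linarith) hL0
  have hσpos : 0 < σ := lt_of_lt_of_le (by linarith) hmL
  set u := Real.sqrt (ε/σ) with hudef
  set sE := Real.sqrt (σ*ε) with hsEdef
  have hupos : 0 < u := Real.sqrt_pos.2 (div_pos hε hσpos)
  have hsEpos : 0 < sE := Real.sqrt_pos.2 (mul_pos hσpos hε)
  have hu2 : u^2 = ε/σ := Real.sq_sqrt (le_of_lt (div_pos hε hσpos))
  have hσu2 : σ * u^2 = ε := by rw [hu2]; field_simp
  have hsE2 : sE^2 = σ*ε := Real.sq_sqrt (by positivity)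
  have hσu : σ * u = sE := by
    rw [hsEdef, show σ*ε = (σ*u)^2 by linear_combination (-σ) * hσu2]
    exact (Real.sqrt_sq (by positivity)).symm
  have hsu : sE * u = ε := by
    rw [← hσu, show σ*u*u = σ*u^2 by ring, hσu2]
  set k := ((9:ℝ)/128) ^ ((1:ℝ)/3) with hkdef
  have hkpos : 0 < k := Real.rpow_pos_of_pos (by norm_num) _
  have hk3 : k^3 = 9/128 := rpow_cube (by norm_num)
  have hklb : 0.41 ≤ k := cube_le hkpos.le (by rw [hk3]; norm_num)
  have hkub : k ≤ 0.42 := cube_le (by norm_num) (by rw [hk3]; norm_num)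
  set R := k * u with hRdef
  have hRpos : 0 < R := mul_pos hkpos hupos
  -- δB facts
  set δB := 2 * (n:ℝ) * L / 3 * h with hδBdef
  have hδBnn : 0 ≤ δB := by positivity
  have hnpos : (0:ℝ) < (n:ℝ) := by linarith
  have hW : h^3 ≤ 3^4 * σ ^ ((3:ℝ)/2) * ε ^ ((3:ℝ)/2) / (2^14*192*(n:ℝ)^3*L^3) := by
    have hWnn : (0:ℝ) ≤ 3^4 * σ ^ ((3:ℝ)/2) * ε ^ ((3:ℝ)/2) / (2^14*192*(n:ℝ)^3*L^3) := by
      positivity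
    calc h^3 ≤ ((3^4 * σ ^ ((3:ℝ)/2) * ε ^ ((3:ℝ)/2) / (2^14*192*(n:ℝ)^3*L^3)) ^ ((1:ℝ)/3))^3 :=
          pow_le_pow_left₀ hh.le hhle 3
      _ = _ := rpow_cube hWnn
  have hse3 : σ ^ ((3:ℝ)/2) * ε ^ ((3:ℝ)/2) = sE^3 := by
    rw [← Real.mul_rpow hσpos.le hε.le, hsEdef, Real.sqrt_eq_rpow,
      ← Real.rpow_natCast ((σ*ε) ^ ((1:ℝ)/2)) 3, ← Real.rpow_mul (by positivity)]
    norm_num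
  have hδB3 : δB^3 ≤ sE^3 / 131072 := by
    have e : δB^3 = (8*(n:ℝ)^3*L^3/27) * h^3 := by rw [hδBdef]; ring
    rw [e]
    have h2 : (8*(n:ℝ)^3*L^3/27) * h^3
        ≤ (8*(n:ℝ)^3*L^3/27) * (3^4 * sE^3 / (2^14*192*(n:ℝ)^3*L^3)) := by
      refine mul_le_mul_of_nonneg_left ?_ (by positivity)
      calc h^3 ≤ 3^4 * σ ^ ((3:ℝ)/2) * ε ^ ((3:ℝ)/2) / (2^14*192*(n:ℝ)^3*L^3) := hW
        _ = 3^4 * (σ ^ ((3:ℝ)/2) * ε ^ ((3:ℝ)/2)) / (2^14*192*(n:ℝ)^3*L^3) := by ring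
        _ = 3^4 * sE^3 / (2^14*192*(n:ℝ)^3*L^3) := by rw [hse3]
    refine h2.trans (le_of_eq ?_)
    field_simp
    ring
  have hδB_s : δB ≤ sE/50 := by
    refine cube_le (by positivity) ?_
    have : (sE/50)^3 = sE^3/125000 := by ring
    rw [this]
    linarith [hδB3, pow_nonneg hsEpos.le 3]
  have hδB_k : δB ≤ 2*k*sE/27 := by
    refine cube_le (by positivity) ?_
    have e : (2*k*sE/27)^3 = 8*k^3*sE^3/19683 := by ring
    rw [e, hk3]
    linarith [hδB3, pow_nonneg hsEpos.le 3]
  -- δg facts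
  set δg := Real.sqrt (n:ℝ) * L / 6 * hg^2 with hδgdef
  have hsqn : 0 < Real.sqrt (n:ℝ) := Real.sqrt_pos.2 hnpos
  set γ2 := (3:ℝ)^((2:ℝ)/3) with hγ2def
  have hγ2pos : 0 < γ2 := Real.rpow_pos_of_pos (by norm_num) _
  have hγ23 : γ2^3 = 9 := by
    rw [hγ2def, ← Real.rpow_natCast ((3:ℝ)^((2:ℝ)/3)) 3, ← Real.rpow_mul (by norm_num)]
    norm_num
  have hg2 : hg^2 = (ε*m/(σ*Real.sqrt n)) / γ2 := by
    rw [hgdef, mul_pow, rpow_half_sq (by positivity)]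
    have e : ((3:ℝ) ^ (-(1:ℝ)/3))^2 = 1/γ2 := by
      rw [← Real.rpow_natCast ((3:ℝ) ^ (-(1:ℝ)/3)) 2, ← Real.rpow_mul (by norm_num : (0:ℝ) ≤ 3),
        hγ2def, show (-(1:ℝ)/3 * ((2:ℕ):ℝ) : ℝ) = -(2/3) by push_cast; ring,
        Real.rpow_neg (by norm_num : (0:ℝ) ≤ 3), one_div]
    rw [e]
    ring
  have hδg_eq : δg = L*(m:ℝ)*ε/(6*γ2*σ) := by
    rw [hδgdef, hg2]
    field_simp
  have hδgnn : 0 ≤ δg := by rw [hδg_eq]; positivity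
  have hη3 : (γ2*β)^3 = 6 := by rw [mul_pow, hγ23, hβ3]; norm_num
  have hηpos : 0 < γ2*β := mul_pos hγ2pos hβpos
  have hηlb : 1.78 ≤ γ2*β := cube_le hηpos.le (by rw [hη3]; norm_num)
  have hδg_le : δg ≤ ε/(96*(γ2*β)) := by
    rw [hδg_eq, div_le_div_iff₀ (by positivity) (by positivity)]
    have h16 : 16*β*((m:ℝ)*L) ≤ σ := by linarith [hσ]
    have h2 := mul_le_mul_of_nonneg_left (mul_le_mul_of_nonneg_right h16 hε.le)
      (by positivity : (0:ℝ) ≤ 6*γ2)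
    linarith [h2]
  have hk2 : (0.1681:ℝ) ≤ k^2 := by
    have h3 : (0.41:ℝ)*0.41 ≤ k*k := mul_le_mul hklb hklb (by norm_num) hkpos.le
    calc (0.1681:ℝ) = 0.41*0.41 := by norm_num
      _ ≤ k*k := h3
      _ = k^2 := (sq k).symm
  have hc27 : (27:ℝ) ≤ 96*((γ2*β)*k^2) := by
    have h3 : (1.78:ℝ)*0.1681 ≤ (γ2*β)*k^2 :=
      mul_le_mul hηlb hk2 (by norm_num) (le_trans (by norm_num) hηlb)
    linarith
  have hδg_k : δg ≤ k^2*ε/27 := by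
    refine hδg_le.trans ?_
    rw [div_le_div_iff₀ (by positivity) (by norm_num)]
    have := mul_le_mul_of_nonneg_right hc27 hε.le
    linarith
  have hδg_e : 170*δg ≤ ε := by
    have h96 : (170:ℝ) ≤ 96*(γ2*β) := by linarith
    have h5 : ε/(96*(γ2*β)) ≤ ε/170 :=
      div_le_div_of_nonneg_left hε.le (by norm_num) h96
    have := hδg_le.trans h5
    linarith
  -- sequence quantities
  set r : ℕ → ℝ := fun t => ‖x (t+1) - x t‖ with hrdef
  have hrnn : ∀ t, 0 ≤ r t := fun t => norm_nonneg _
  set S1 := ∑ i ∈ Finset.range m, r i with hS1def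
  set S2 := ∑ i ∈ Finset.range m, r i ^ 2 with hS2def
  set X := ∑ i ∈ Finset.range m, r i ^ 3 with hXdef
  have hS1nn : 0 ≤ S1 := Finset.sum_nonneg fun i _ => hrnn i
  have hS2nn : 0 ≤ S2 := Finset.sum_nonneg fun i _ => sq_nonneg _
  have hXnn : 0 ≤ X := Finset.sum_nonneg fun i _ => pow_nonneg (hrnn i) 3
  have hpm1 : S1^3 ≤ (m:ℝ)^2 * X := power_mean_13' hrnn
  have hpm2 : S2^3 ≤ (m:ℝ) * X^2 := power_mean_23' hrnn
  have hS1S2 : S1*S2 ≤ (m:ℝ)*X := by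
    refine cube_le (by positivity) ?_
    have e : (S1*S2)^3 = S1^3*S2^3 := by ring
    rw [e]
    calc S1^3*S2^3 ≤ ((m:ℝ)^2*X)*((m:ℝ)*X^2) :=
          mul_le_mul hpm1 hpm2 (pow_nonneg hS2nn 3) (by positivity)
      _ = ((m:ℝ)*X)^3 := by ring
  have hdist : ∀ t, ‖x t - x 0‖ ≤ ∑ i ∈ Finset.range t, r i := by
    intro t
    have e : x t - x 0 = ∑ i ∈ Finset.range t, (x (i+1) - x i) :=
      (Finset.sum_range_sub (fun i => x i) t).symm
    rw [e]
    exact norm_sum_le _ _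
  have hD : ∀ t, ‖fderiv ℝ (gradient f) (x t) - B‖ ≤ δB + L * ∑ i ∈ Finset.range t, r i := by
    intro t
    have e : fderiv ℝ (gradient f) (x t) - B
        = (fderiv ℝ (gradient f) (x t) - fderiv ℝ (gradient f) (x 0))
          + -(B - fderiv ℝ (gradient f) (x 0)) := by abel
    rw [e]
    refine (norm_add_le _ _).trans ?_
    rw [norm_neg]
    have b1 : ‖fderiv ℝ (gradient f) (x t) - fderiv ℝ (gradient f) (x 0)‖ ≤ L * ‖x t - x 0‖ :=
      hLip (x 0) (x t)
    have b2 : L * ‖x t - x 0‖ ≤ L * ∑ i ∈ Finset.range t, r i :=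
      mul_le_mul_of_nonneg_left (hdist t) hL
    linarith [hB]
  have hdec' : ∀ t < m, (σ-L)/6 * r t^3 - δg * r t
      - (δB + L * ∑ i ∈ Finset.range t, r i)/2 * r t^2
      ≤ (f (x t) + ψ (x t)) - (f (x (t+1)) + ψ (x (t+1))) := by
    intro t ht
    have hsd := step_decrease' hf hLip (x t) (x (t+1)) (g t) B σ (ψ (x t)) (ψ (x (t+1)))
      (hdec t ht)
    refine le_trans ?_ hsd
    have b1 : ‖g t - gradient f (x t)‖ ≤ δg := hgapprox t ht
    have b2 := hD t
    have m1 : ‖g t - gradient f (x t)‖ * r t ≤ δg * r t :=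
      mul_le_mul_of_nonneg_right b1 (hrnn t)
    have m2 : ‖fderiv ℝ (gradient f) (x t) - B‖ * r t^2
        ≤ (δB + L * ∑ i ∈ Finset.range t, r i) * r t^2 :=
      mul_le_mul_of_nonneg_right b2 (sq_nonneg _)
    have : ‖x (t+1) - x t‖ = r t := rfl
    rw [this]
    linarith
  have htot : (σ-L)/6 * X - δg*S1 - δB/2*S2 - L/2*(S1*S2)
      ≤ (f (x 0) + ψ (x 0)) - (f (x m) + ψ (x m)) := by
    have tele : ∑ t ∈ Finset.range m, ((f (x t) + ψ (x t)) - (f (x (t+1)) + ψ (x (t+1))))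
        = (f (x 0) + ψ (x 0)) - (f (x m) + ψ (x m)) :=
      Finset.sum_range_sub' (fun t => f (x t) + ψ (x t)) m
    rw [← tele]
    have step : ∀ t ∈ Finset.range m,
        (σ-L)/6 * r t^3 - δg * r t - δB/2 * r t^2 - L/2*(S1 * r t^2)
        ≤ (f (x t) + ψ (x t)) - (f (x (t+1)) + ψ (x (t+1))) := by
      intro t ht
      refine le_trans ?_ (hdec' t (Finset.mem_range.1 ht))
      have hsub : ∑ i ∈ Finset.range t, r i ≤ S1 :=
        Finset.sum_le_sum_of_subset_of_nonneg
          (Finset.range_subset_range.2 (le_of_lt (Finset.mem_range.1 ht)))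
          (fun i _ _ => hrnn i)
      have m3 : L * (∑ i ∈ Finset.range t, r i) * r t^2 ≤ L * S1 * r t^2 :=
        mul_le_mul_of_nonneg_right (mul_le_mul_of_nonneg_left hsub hL) (sq_nonneg _)
      linarith
    calc (σ-L)/6 * X - δg*S1 - δB/2*S2 - L/2*(S1*S2)
        = ∑ t ∈ Finset.range m,
            ((σ-L)/6 * r t^3 - δg * r t - δB/2 * r t^2 - L/2*(S1 * r t^2)) := by
          rw [hXdef, hS1def, hS2def]
          rw [Finset.mul_sum, Finset.mul_sum, Finset.mul_sum, Finset.mul_sum, Finset.mul_sum]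
          rw [← Finset.sum_sub_distrib, ← Finset.sum_sub_distrib, ← Finset.sum_sub_distrib]
      _ ≤ _ := Finset.sum_le_sum step
  rcases le_or_gt ((m:ℝ) * R^3) X with hcase | hcase
  · -- enough decrease: right disjunct
    right
    have hXpos : 0 < X := lt_of_lt_of_le (by positivity) hcase
    have hc1 : δg * S1 ≤ σ/27 * X := by
      refine cube_le (by positivity) ?_
      have b1 : δg^3 ≤ (k^2*ε/27)^3 := pow_le_pow_left₀ hδgnn hδg_k 3
      have b2 : δg^3 * S1^3 ≤ (k^2*ε/27)^3 * ((m:ℝ)^2*X) :=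
        mul_le_mul b1 hpm1 (pow_nonneg hS1nn 3) (by positivity)
      have hX2 : ((m:ℝ)*R^3)^2 ≤ X^2 := pow_le_pow_left₀ (by positivity) hcase 2
      have e2 : σ^3 * ((m:ℝ)*R^3)^2 = (m:ℝ)^2 * (k^2*ε)^3 := by
        rw [hRdef]
        linear_combination ((m:ℝ)^2*k^6*(σ^2*u^4 + σ*u^2*ε + ε^2)) * hσu2
      have b3 : (k^2*ε/27)^3 * ((m:ℝ)^2*X) ≤ (σ/27*X)^3 := by
        have e3 : (σ/27*X)^3 = (σ^3*X^2)*X/19683 := by ring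
        have e4 : (k^2*ε/27)^3 * ((m:ℝ)^2*X) = ((m:ℝ)^2*(k^2*ε)^3)*X/19683 := by ring
        rw [e3, e4]
        have b5 : (m:ℝ)^2*(k^2*ε)^3 ≤ σ^3*X^2 := by
          rw [← e2]
          exact mul_le_mul_of_nonneg_left hX2 (by positivity)
        have := mul_le_mul_of_nonneg_right b5 hXnn
        linarith
      calc (δg*S1)^3 = δg^3*S1^3 := by ring
        _ ≤ (k^2*ε/27)^3 * ((m:ℝ)^2*X) := b2
        _ ≤ (σ/27*X)^3 := b3
    have hc2 : δB/2 * S2 ≤ σ/27 * X := by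
      refine cube_le (by positivity) ?_
      have hδB2 : δB/2 ≤ k*sE/27 := by linarith
      have b1 : (δB/2)^3 ≤ (k*sE/27)^3 := pow_le_pow_left₀ (by positivity) hδB2 3
      have b2 : (δB/2)^3 * S2^3 ≤ (k*sE/27)^3 * ((m:ℝ)*X^2) :=
        mul_le_mul b1 hpm2 (pow_nonneg hS2nn 3) (by positivity)
      have e2 : σ^3 * ((m:ℝ)*R^3) = (m:ℝ) * (k*sE)^3 := by
        rw [hRdef, ← hσu]
        ring
      have b3 : (k*sE/27)^3 * ((m:ℝ)*X^2) ≤ (σ/27*X)^3 := by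
        have e3 : (σ/27*X)^3 = (σ^3*X)*X^2/19683 := by ring
        have e4 : (k*sE/27)^3 * ((m:ℝ)*X^2) = ((m:ℝ)*(k*sE)^3)*X^2/19683 := by ring
        rw [e3, e4]
        have b5 : (m:ℝ)*(k*sE)^3 ≤ σ^3*X := by
          rw [← e2]
          exact mul_le_mul_of_nonneg_left hcase (by positivity)
        have := mul_le_mul_of_nonneg_right b5 (sq_nonneg X)
        linarith
      calc (δB/2*S2)^3 = (δB/2)^3*S2^3 := by ring
        _ ≤ (k*sE/27)^3 * ((m:ℝ)*X^2) := b2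
        _ ≤ (σ/27*X)^3 := b3
    have hLmX : L/2*(S1*S2) ≤ (m:ℝ)*L/2*X := by
      have := mul_le_mul_of_nonneg_left hS1S2 (by positivity : (0:ℝ) ≤ L/2)
      linarith
    have hcoef : σ/18 - L/6 - (m:ℝ)*L/2 ≥ 0 := by
      have hLm : L ≤ (m:ℝ)*L := le_mul_of_one_le_left hL hm1
      linarith
    have hfin1 : σ/27 * X ≤ (f (x 0) + ψ (x 0)) - (f (x m) + ψ (x m)) := by
      have hc3 : 0 ≤ (σ/18 - L/6 - (m:ℝ)*L/2) * X := mul_nonneg hcoef hXnn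
      linarith [htot, hc1, hc2, hLmX, hc3]
    have eR : σ/27 * ((m:ℝ)*R^3) = (m:ℝ)*ε*u/384 := by
      rw [hRdef]
      have h6 : σ*u^3 = ε*u := by
        calc σ*u^3 = (σ*u^2)*u := by ring
          _ = ε*u := by rw [hσu2]
      calc σ/27*((m:ℝ)*(k*u)^3) = (m:ℝ)*(k^3)*(σ*u^3)/27 := by ring
        _ = (m:ℝ)*(9/128)*(ε*u)/27 := by rw [hk3, h6]
        _ = (m:ℝ)*ε*u/384 := by ring
    have eRHS : (m:ℝ)*ε ^ ((3:ℝ)/2) / (2*192*Real.sqrt σ) = (m:ℝ)*ε*u/384 := by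
      have h1 : ε ^ ((3:ℝ)/2) = ε * Real.sqrt ε := by
        rw [show (3:ℝ)/2 = 1 + 1/2 by norm_num, Real.rpow_add hε, Real.rpow_one,
          Real.sqrt_eq_rpow]
      have h2 : u = Real.sqrt ε / Real.sqrt σ := by
        rw [hudef, Real.sqrt_div hε.le]
      have hσs : Real.sqrt σ ≠ 0 := ne_of_gt (Real.sqrt_pos.2 hσpos)
      rw [h1, h2]
      field_simp
      ring
    rw [ge_iff_le, eRHS]
    have hmono : σ/27*((m:ℝ)*R^3) ≤ σ/27*X := mul_le_mul_of_nonneg_left hcase (by positivity)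
    linarith [eR ▸ hmono]
  · -- small step exists: left disjunct
    left
    have hex : ∃ t ∈ Finset.range m, r t^3 < R^3 := by
      by_contra hcon
      push_neg at hcon
      have h1 : ∑ _t ∈ Finset.range m, R^3 ≤ X := Finset.sum_le_sum (fun t ht => hcon t ht)
      have h2 : (m:ℝ)*R^3 = ∑ _t ∈ Finset.range m, R^3 := by
        rw [Finset.sum_const, Finset.card_range, nsmul_eq_mul]
      linarith
    obtain ⟨t0, ht0m, ht0⟩ := hex
    have ht0m' : t0 < m := Finset.mem_range.1 ht0m
    have hrR : r t0 ≤ R := cube_le hRpos.le ht0.le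
    refine ⟨t0+1, Nat.le_add_left 1 t0, Nat.succ_le_of_lt ht0m', ?_⟩
    have hS1R : S1 ≤ (m:ℝ)*R := by
      refine cube_le (by positivity) ?_
      calc S1^3 ≤ (m:ℝ)^2*X := hpm1
        _ ≤ (m:ℝ)^2*((m:ℝ)*R^3) := mul_le_mul_of_nonneg_left hcase.le (by positivity)
        _ = ((m:ℝ)*R)^3 := by ring
    have hsub0 : ∑ i ∈ Finset.range t0, r i ≤ S1 := Finset.sum_le_sum_of_subset_of_nonneg
      (Finset.range_subset_range.2 ht0m'.le) (fun i _ _ => hrnn i)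
    have hDt : ‖fderiv ℝ (gradient f) (x t0) - B‖ ≤ δB + L*((m:ℝ)*R) := by
      refine (hD t0).trans ?_
      have : L * (∑ i ∈ Finset.range t0, r i) ≤ L*((m:ℝ)*R) :=
        mul_le_mul_of_nonneg_left (hsub0.trans hS1R) hL
      linarith
    have hLσ13 : L ≤ σ/13 := by
      have : L ≤ (m:ℝ)*L := le_mul_of_one_le_left hL hm1
      linarith
    have hmLσ13 : (m:ℝ)*L ≤ σ/13 := by linarith
    have hσR2 : σ*R^2 = k^2*ε := by
      rw [hRdef]
      linear_combination k^2 * hσu2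
    have hrt : ‖x (t0+1) - x t0‖ = r t0 := rfl
    have hgoal1 : ‖gradient f (x (t0+1)) + ψ' (t0+1)‖ ≤ ε := by
      have hgb := grad_bound' hf hLip (x t0) (x (t0+1)) (g t0) (ψ' (t0+1)) B hσpos.le
        (hmodel t0 ht0m')
      rw [hrt] at hgb
      have hr2 : r t0^2 ≤ R^2 := pow_le_pow_left₀ (hrnn t0) hrR 2
      have t1 : L/2*r t0^2 ≤ σ/26*R^2 := by
        have a1 : L/2*r t0^2 ≤ L/2*R^2 := mul_le_mul_of_nonneg_left hr2 (by positivity)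
        have a2 : L/2*R^2 ≤ σ/13/2*R^2 := mul_le_mul_of_nonneg_right (by linarith) (sq_nonneg R)
        linarith
      have t2 : ‖g t0 - gradient f (x t0)‖ ≤ δg := hgapprox t0 ht0m'
      have t3 : ‖fderiv ℝ (gradient f) (x t0) - B‖ * r t0 ≤ (δB + L*((m:ℝ)*R))*R :=
        mul_le_mul hDt hrR (hrnn t0) (by positivity)
      have t4 : δB*R ≤ 0.42*ε/50 := by
        have a1 : δB*R ≤ (sE/50)*R := mul_le_mul_of_nonneg_right hδB_s (by positivity)
        have a2 : (sE/50)*R = k*(sE*u)/50 := by rw [hRdef]; ring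
        rw [a2, hsu] at a1
        have a3 := mul_le_mul_of_nonneg_right hkub hε.le
        linarith
      have t5 : L*((m:ℝ)*R)*R ≤ σ/13*R^2 := by
        have a1 : (m:ℝ)*L*R^2 ≤ σ/13*R^2 := mul_le_mul_of_nonneg_right hmLσ13 (sq_nonneg R)
        calc L*((m:ℝ)*R)*R = (m:ℝ)*L*R^2 := by ring
          _ ≤ σ/13*R^2 := a1
      have t6 : 3*σ/4*r t0^2 ≤ 3/4*(σ*R^2) := by
        have := mul_le_mul_of_nonneg_left hr2 (by positivity : (0:ℝ) ≤ 3*σ/4)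
        linarith
      have z1 : σ/26*R^2 = k^2*ε/26 := by linear_combination (1/26) * hσR2
      have z2 : σ/13*R^2 = k^2*ε/13 := by linear_combination (1/13) * hσR2
      have z3 : 3/4*(σ*R^2) = 3/4*(k^2*ε) := by rw [hσR2]
      have hk2e : k^2*ε ≤ 0.1764*ε := by
        have hk2ub : k^2 ≤ 0.1764 := by
          have a1 : k*k ≤ 0.42*0.42 := mul_le_mul hkub hkub hkpos.le (by norm_num)
          calc k^2 = k*k := sq k
            _ ≤ 0.42*0.42 := a1
            _ = 0.1764 := by norm_num
        exact mul_le_mul_of_nonneg_right hk2ub hε.le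
      have hδg' : δg ≤ ε/170 := by linarith [hδg_e]
      refine hgb.trans ?_
      have e5 : (δB + L*((m:ℝ)*R))*R = δB*R + L*((m:ℝ)*R)*R := by ring
      rw [e5] at t3
      linarith [t1, t2, t3, t4, t5, t6, z1, z2, z3, hk2e, hδg', hε.le]
    have hgoal2 : 1/σ * ((2:ℝ)/3)^((10:ℝ)/3)
        * (negEigPart (fun y => f y + ψ y) (x (t0+1)))^2 ≤ ε := by
      set c0 := σ*r t0 + L*r t0 + ‖fderiv ℝ (gradient f) (x t0) - B‖ with hc0def
      have hc0nn : 0 ≤ c0 := by positivity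
      have hHsum : ∀ v : EuclideanSpace ℝ (Fin n),
          (fderiv ℝ (gradient (fun y => f y + ψ y)) (x (t0+1))) v
          = (fderiv ℝ (gradient f) (x (t0+1))) v + (fderiv ℝ (gradient ψ) (x (t0+1))) v := by
        intro v
        have e1 : gradient (fun y => f y + ψ y) = fun y => gradient f y + gradient ψ y :=
          funext (fun y => gradient_add'' hfd hψd y)
        rw [e1, fderiv_fun_add (hGf (x (t0+1))) (hGψ (x (t0+1)))]
        simp
      have hmem : c0 ∈ {c : ℝ | 0 ≤ c ∧ ∀ v : EuclideanSpace ℝ (Fin n),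
          -(c * ‖v‖ ^ 2) ≤ ⟪fderiv ℝ (gradient (fun y => f y + ψ y)) (x (t0+1)) v, v⟫} := by
        refine ⟨hc0nn, fun v => ?_⟩
        rw [hHsum v, inner_add_left]
        have p1 := hPSD t0 ht0m' v
        have q1 : -((L*r t0)*‖v‖^2)
            ≤ ⟪(fderiv ℝ (gradient f) (x (t0+1)) - fderiv ℝ (gradient f) (x t0)) v, v⟫ := by
          have i1 := inner_ge_neg_opNorm
            (fderiv ℝ (gradient f) (x (t0+1)) - fderiv ℝ (gradient f) (x t0)) v
          have i2 := hLip (x t0) (x (t0+1))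
          rw [hrt] at i2
          have i3 := mul_le_mul_of_nonneg_right i2 (sq_nonneg ‖v‖)
          linarith
        have q2 : -(‖fderiv ℝ (gradient f) (x t0) - B‖*‖v‖^2)
            ≤ ⟪(fderiv ℝ (gradient f) (x t0) - B) v, v⟫ := inner_ge_neg_opNorm _ v
        have e2 : (fderiv ℝ (gradient f) (x (t0+1)) - fderiv ℝ (gradient f) (x t0)) v
            = fderiv ℝ (gradient f) (x (t0+1)) v - fderiv ℝ (gradient f) (x t0) v :=
          ContinuousLinearMap.sub_apply _ _ _
        have e3 : (fderiv ℝ (gradient f) (x t0) - B) v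
            = fderiv ℝ (gradient f) (x t0) v - B v := ContinuousLinearMap.sub_apply _ _ _
        rw [e2, inner_sub_left] at q1
        rw [e3, inner_sub_left] at q2
        rw [hrt] at p1
        rw [hc0def]
        linarith [q1, q2, p1]
      have hbdd : BddBelow {c : ℝ | 0 ≤ c ∧ ∀ v : EuclideanSpace ℝ (Fin n),
          -(c * ‖v‖ ^ 2) ≤ ⟪fderiv ℝ (gradient (fun y => f y + ψ y)) (x (t0+1)) v, v⟫} :=
        ⟨0, fun c hc => hc.1⟩
      have hξle : negEigPart (fun y => f y + ψ y) (x (t0+1)) ≤ c0 := by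
        unfold negEigPart
        exact csInf_le hbdd hmem
      have hξnn : 0 ≤ negEigPart (fun y => f y + ψ y) (x (t0+1)) := by
        unfold negEigPart
        exact Real.sInf_nonneg (fun c hc => hc.1)
      have hc0le : c0 ≤ 0.51*sE := by
        have a1 : σ*r t0 ≤ σ*R := mul_le_mul_of_nonneg_left hrR hσpos.le
        have a2 : σ*R = k*sE := by rw [hRdef, ← hσu]; ring
        have a3 : k*sE ≤ 0.42*sE := mul_le_mul_of_nonneg_right hkub hsEpos.le
        have a4 : L*r t0 ≤ σ/13*R := by
          have b1 : L*r t0 ≤ L*R := mul_le_mul_of_nonneg_left hrR hL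
          have b2 : L*R ≤ σ/13*R := mul_le_mul_of_nonneg_right hLσ13 (by positivity)
          linarith
        have a5 : σ/13*R = k*sE/13 := by linear_combination (1/13)*a2
        have a7 : L*((m:ℝ)*R) ≤ σ/13*R := by
          have b3 := mul_le_mul_of_nonneg_right hmLσ13 (le_of_lt hRpos)
          calc L*((m:ℝ)*R) = ((m:ℝ)*L)*R := by ring
            _ ≤ σ/13*R := b3
        have a9 : k*sE/13 ≤ 0.42*sE/13 := by linarith [a3]
        rw [hc0def]
        linarith [a1, a2, a3, a4, a5, hDt, a7, hδB_s, a9, hsEpos.le]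
      have hξ2 : (negEigPart (fun y => f y + ψ y) (x (t0+1)))^2 ≤ σ*ε := by
        have b1 : (negEigPart (fun y => f y + ψ y) (x (t0+1)))^2 ≤ (0.51*sE)^2 :=
          pow_le_pow_left₀ hξnn (hξle.trans hc0le) 2
        have b2 : (0.51*sE)^2 = 0.2601*(σ*ε) := by
          rw [show (0.51*sE)^2 = 0.2601*sE^2 by ring, hsE2]
        have b3 : (0.2601:ℝ)*(σ*ε) ≤ 1*(σ*ε) :=
          mul_le_mul_of_nonneg_right (by norm_num) (by positivity)
        linarith
      have hrp1 : ((2:ℝ)/3)^((10:ℝ)/3) ≤ 1 :=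
        Real.rpow_le_one (by norm_num) (by norm_num) (by norm_num)
      have hrpnn : 0 ≤ ((2:ℝ)/3)^((10:ℝ)/3) := Real.rpow_nonneg (by norm_num) _
      calc 1/σ * ((2:ℝ)/3)^((10:ℝ)/3) * (negEigPart (fun y => f y + ψ y) (x (t0+1)))^2
          ≤ 1/σ * 1 * (σ*ε) := by
            refine mul_le_mul (mul_le_mul le_rfl hrp1 hrpnn (by positivity)) hξ2
              (sq_nonneg _) (by positivity)
        _ = ε := by field_simp
    exact max_le hgoal1 hgoal2
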